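/- Let (N,v) be a TU game with veto player a, empty core, and ε̂ := min{ (v(N)−v(S))/(|N|−|S|+1) : S proper, a ∈ S } attained at Ŝ = N\{k} for a player k ≠ a. If v(N) ≥ v(S) + ε̂ for every proper S with a,k ∈ S and v(N) ≥ v(S) + 2ε̂ for every proper S with a ∈ S, k ∉ S, then ε* = ε̂ and the allocation x with x_k = ε̂ and x_i = 0 for i ≠ k (and x_a = v(N) − ε̂) is in the least core C_{ε̂}. -/
import Mathlib


open Finset

/-- The strong ε-core of a TU game. -/
def epsCore {ι : Type*} [Fintype ι] [DecidableEq ι] (v : Finset ι → ℝ) (ε : ℝ) :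
    Set (ι → ℝ) :=
  {x | (∑ i, x i) = v Finset.univ ∧
    ∀ S : Finset ι, S.Nonempty → S ≠ Finset.univ → v S + ε ≤ ∑ i ∈ S, x i}

/-- The least core value: the largest ε for which the strong ε-core is nonempty. -/
noncomputable def lcv {ι : Type*} [Fintype ι] [DecidableEq ι] (v : Finset ι → ℝ) : ℝ :=
  sSup {ε : ℝ | (epsCore v ε).Nonempty}

/-- The set of proper coalitions containing the player `a`. -/
def Pa {ι : Type*} [Fintype ι] [DecidableEq ι] (a : ι) : Finset (Finset ι) :=
  Finset.univ.filter (fun S => a ∈ S ∧ S ≠ Finset.univ)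

/-- The quantity `(v(N) − v(S))/(|N| − |S| + 1)`. -/
noncomputable def excessRatio {ι : Type*} [Fintype ι] [DecidableEq ι]
    (v : Finset ι → ℝ) (S : Finset ι) : ℝ :=
  (v Finset.univ - v S) / ((Fintype.card ι : ℝ) - (S.card : ℝ) + 1)

/-- ('If' direction of the unbalanced characterization.) Suppose the core is empty
and `ε̂ = min{(v(N)−v(S))/(|N|−|S|+1) : S proper, a ∈ S}` is attained at
`Ŝ = N \ {k}` with `k ≠ a`. If `v(N) ≥ v(S) + ε̂` for every proper `S` containing
both `a` and `k`, and `v(N) ≥ v(S) + 2ε̂` for every proper `S ∋ a` with `k ∉ S`,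
then `ε* = ε̂` and the allocation `x̌` with `x̌_k = ε̂`, `x̌_a = v(N) − ε̂` and
`x̌_i = 0` otherwise, belongs to the least core `C_{ε̂}`. -/
theorem stmt19 {ι : Type*} [Fintype ι] [DecidableEq ι] (v : Finset ι → ℝ) (a k : ι)
    (hcard : 3 ≤ Fintype.card ι)
    (hempty : v ∅ = 0)
    (hveto : ∀ S : Finset ι, a ∉ S → v S = 0)
    (hcore : ¬ (epsCore v 0).Nonempty)
    (hka : k ≠ a)
    (hPa : (Pa a).Nonempty)
    (εhat : ℝ) (hεhat : εhat = (Pa a).inf' hPa (excessRatio v))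
    (hattain : excessRatio v (Finset.univ.erase k) = εhat)
    (h1 : ∀ S : Finset ι, S.Nonempty → S ≠ Finset.univ → a ∈ S → k ∈ S →
      v S + εhat ≤ v Finset.univ)
    (h2 : ∀ S : Finset ι, S.Nonempty → S ≠ Finset.univ → a ∈ S → k ∉ S →
      v S + 2 * εhat ≤ v Finset.univ) :
    lcv v = εhat ∧
    (fun i => if i = a then v Finset.univ - εhat else if i = k then εhat else 0)
      ∈ epsCore v εhat := by
  have hak : a ≠ k := hka.symm
  have hkuniv : ({k} : Finset ι) ≠ Finset.univ := by
    intro h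
    have h1 : Fintype.card ι = 1 := by
      rw [← Finset.card_univ, ← h, Finset.card_singleton]
    omega
  have herase_card : (Finset.univ.erase k).card = Fintype.card ι - 1 := by
    rw [Finset.card_erase_of_mem (mem_univ k), Finset.card_univ]
  have hne : (Finset.univ.erase k).Nonempty := by
    rw [← Finset.card_pos, herase_card]; omega
  have herase_ne : Finset.univ.erase k ≠ Finset.univ := by
    intro h
    have hk : k ∈ Finset.univ.erase k := by rw [h]; exact Finset.mem_univ k
    exact Finset.notMem_erase k Finset.univ hk
  have hcast : ((Fintype.card ι : ℝ) - ((Fintype.card ι - 1 : ℕ) : ℝ) + 1) = 2 := by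
    have h1 : (1:ℕ) ≤ Fintype.card ι := by omega
    push_cast [h1]
    ring
  have hkey : v Finset.univ - v (Finset.univ.erase k) = 2 * εhat := by
    have h := hattain
    rw [excessRatio, herase_card, hcast] at h
    linarith [h]
  have hεle : ∀ S : Finset ι, a ∈ S → S ≠ Finset.univ → εhat ≤ excessRatio v S := by
    intro S haS hSu
    rw [hεhat]
    exact Finset.inf'_le _ (by simp [Pa, haS, hSu])
  have hε0 : εhat ≤ 0 := by
    by_contra hpos
    push_neg at hpos
    apply hcore
    refine ⟨fun i => if i = a then v Finset.univ else 0, ?_, ?_⟩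
    · simp [Finset.sum_ite_eq']
    · intro S hSne hSu
      by_cases haS : a ∈ S
      · have hle := hεle S haS hSu
        have hd : (0:ℝ) < (Fintype.card ι : ℝ) - S.card + 1 := by
          have hlt : S.card < Fintype.card ι := by
            rw [← Finset.card_univ]
            exact Finset.card_lt_card (Finset.ssubset_univ_iff.mpr hSu)
          have hlt' : (S.card : ℝ) < Fintype.card ι := by exact_mod_cast hlt
          linarith
        have hvS : 0 < v Finset.univ - v S := by
          have h3 : 0 < (v Finset.univ - v S) / ((Fintype.card ι : ℝ) - S.card + 1) :=
            lt_of_lt_of_le hpos (by rw [excessRatio] at hle; exact hle)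
          rcases div_pos_iff.mp h3 with ⟨h, _⟩ | ⟨_, h⟩
          · exact h
          · linarith
        rw [Finset.sum_ite_eq' S a (fun _ => v Finset.univ), if_pos haS]
        linarith
      · rw [hveto S haS, Finset.sum_ite_eq' S a (fun _ => v Finset.univ), if_neg haS]
        norm_num
  have hsum : ∀ S : Finset ι,
      (∑ i ∈ S, (if i = a then v Finset.univ - εhat else if i = k then εhat else 0))
      = (if a ∈ S then v Finset.univ - εhat else 0) + (if k ∈ S then εhat else 0) := by
    intro S
    rw [← Finset.sum_ite_eq' S a (fun _ => v Finset.univ - εhat),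
      ← Finset.sum_ite_eq' S k (fun _ => εhat), ← Finset.sum_add_distrib]
    apply Finset.sum_congr rfl
    intro i _
    by_cases hia : i = a
    · subst hia; simp [hak]
    · by_cases hik : i = k <;> simp [hia, hik, hka]
  have hmem : (fun i => if i = a then v Finset.univ - εhat else if i = k then εhat else 0)
      ∈ epsCore v εhat := by
    constructor
    · rw [hsum Finset.univ]; simp
    · intro S hSne hSu
      rw [hsum S]
      by_cases haS : a ∈ S <;> by_cases hkS : k ∈ S
      · rw [if_pos haS, if_pos hkS]
        linarith [h1 S hSne hSu haS hkS]
      · rw [if_pos haS, if_neg hkS]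
        linarith [h2 S hSne hSu haS hkS]
      · rw [if_neg haS, if_pos hkS, hveto S haS]
      · rw [if_neg haS, if_neg hkS, hveto S haS]
        linarith
  have hub : ∀ ε ∈ {ε : ℝ | (epsCore v ε).Nonempty}, ε ≤ εhat := by
    rintro ε ⟨x, hxsum, hxc⟩
    have hS := hxc (Finset.univ.erase k) hne herase_ne
    have hk := hxc {k} ⟨k, Finset.mem_singleton_self k⟩ hkuniv
    rw [hveto {k} (by simp [Ne.symm hka]), Finset.sum_singleton] at hk
    have hsplit : ∑ i ∈ Finset.univ.erase k, x i + x k = v Finset.univ := by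
      rw [Finset.sum_erase_add Finset.univ x (Finset.mem_univ k)]
      exact hxsum
    linarith
  have hset_ne : {ε : ℝ | (epsCore v ε).Nonempty}.Nonempty := ⟨εhat, _, hmem⟩
  exact ⟨le_antisymm (csSup_le hset_ne hub) (le_csSup ⟨εhat, hub⟩ ⟨_, hmem⟩), hmem⟩
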